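/- Let θ ∈ (0,1), α ∈ (0,1), and C > 0. There exists a constant M < ∞, depending only on θ, α, C, such that for every K ∈ N and every ε ∈ (0,1) with θ^{K} ≥ ε, the product ∏_{k=1}^{K} (1 + θ^{αk} + C θ^{-(k-1)} ε) is bounded by M. -/

import Mathlib

open Finset

private lemma geom_aux {x : ℝ} (hx0 : 0 ≤ x) (hx1 : x < 1) (n : ℕ) :
    ∑ i ∈ range n, x ^ i ≤ (1 - x)⁻¹ := by
  have h1x : 0 < 1 - x := by linarith
  rw [geom_sum_eq (ne_of_lt hx1)]
  have : (x ^ n - 1) / (x - 1) = (1 - x ^ n) / (1 - x) := by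
    rw [← neg_div_neg_eq, neg_sub, neg_sub]
  rw [this, ← one_div]
  have hxn : 0 ≤ x ^ n := pow_nonneg hx0 n
  exact div_le_div₀ zero_le_one (by linarith) h1x le_rfl

theorem campanato_product_bound (θ α C : ℝ)
    (hθ : θ ∈ Set.Ioo (0 : ℝ) 1) (hα : α ∈ Set.Ioo (0 : ℝ) 1) (hC : 0 < C) :
    ∃ M : ℝ, ∀ K : ℕ, ∀ ε : ℝ, 0 < ε → ε < 1 → ε ≤ θ ^ K →
      ∏ k ∈ Finset.Icc 1 K, (1 + θ ^ (α * (k : ℝ)) + C * θ ^ (-((k : ℝ) - 1)) * ε) ≤ M := by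
  obtain ⟨hθ0, hθ1⟩ := hθ
  obtain ⟨hα0, hα1⟩ := hα
  set r : ℝ := θ ^ α with hrdef
  have hr0 : 0 < r := Real.rpow_pos_of_pos hθ0 α
  have hr1 : r < 1 := Real.rpow_lt_one hθ0.le hθ1 hα0
  refine ⟨Real.exp (r * (1 - r)⁻¹ + C * (θ * (1 - θ)⁻¹)), ?_⟩
  intro K ε hε0 hε1 hεθ
  have hfac : ∀ k ∈ Icc 1 K,
      1 + θ ^ (α * (k : ℝ)) + C * θ ^ (-((k : ℝ) - 1)) * ε ≤
        Real.exp (θ ^ (α * (k : ℝ)) + C * θ ^ (-((k : ℝ) - 1)) * ε) := by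
    intro k _
    have := Real.add_one_le_exp (θ ^ (α * (k : ℝ)) + C * θ ^ (-((k : ℝ) - 1)) * ε)
    linarith
  have hnn : ∀ k ∈ Icc 1 K,
      0 ≤ 1 + θ ^ (α * (k : ℝ)) + C * θ ^ (-((k : ℝ) - 1)) * ε := by
    intro k _
    positivity
  calc ∏ k ∈ Icc 1 K, (1 + θ ^ (α * (k : ℝ)) + C * θ ^ (-((k : ℝ) - 1)) * ε)
      ≤ ∏ k ∈ Icc 1 K, Real.exp (θ ^ (α * (k : ℝ)) + C * θ ^ (-((k : ℝ) - 1)) * ε) :=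
        Finset.prod_le_prod hnn hfac
    _ = Real.exp (∑ k ∈ Icc 1 K, (θ ^ (α * (k : ℝ)) + C * θ ^ (-((k : ℝ) - 1)) * ε)) :=
        (Real.exp_sum _ _).symm
    _ ≤ Real.exp (r * (1 - r)⁻¹ + C * (θ * (1 - θ)⁻¹)) := by
        apply Real.exp_le_exp.2
        rw [Finset.sum_add_distrib]
        have S1 : ∑ k ∈ Icc 1 K, θ ^ (α * (k : ℝ)) ≤ r * (1 - r)⁻¹ := by
          have e1 : ∀ k : ℕ, θ ^ (α * (k : ℝ)) = r ^ k := by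
            intro k
            rw [hrdef, ← Real.rpow_natCast (θ ^ α) k, ← Real.rpow_mul hθ0.le]
          calc ∑ k ∈ Icc 1 K, θ ^ (α * (k : ℝ)) = ∑ k ∈ Icc 1 K, r ^ k :=
                Finset.sum_congr rfl fun k _ => e1 k
            _ = ∑ i ∈ range K, r ^ (1 + i) := by
                rw [← Finset.Ico_add_one_right_eq_Icc, Finset.sum_Ico_eq_sum_range, Nat.add_sub_cancel]
            _ = r * ∑ i ∈ range K, r ^ i := by
                simp [pow_add, pow_one, Finset.mul_sum]
            _ ≤ r * (1 - r)⁻¹ :=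
                mul_le_mul_of_nonneg_left (geom_aux hr0.le hr1 K) hr0.le
        have S2 : ∑ k ∈ Icc 1 K, C * θ ^ (-((k : ℝ) - 1)) * ε ≤ C * (θ * (1 - θ)⁻¹) := by
          have step1 : ∀ k ∈ Icc 1 K,
              C * θ ^ (-((k : ℝ) - 1)) * ε ≤ C * θ ^ ((K : ℝ) - ((k : ℝ) - 1)) := by
            intro k _
            have hεK : ε ≤ θ ^ (K : ℝ) := by
              rwa [Real.rpow_natCast]
            have hp : 0 < θ ^ (-((k : ℝ) - 1)) := Real.rpow_pos_of_pos hθ0 _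
            have : θ ^ (-((k : ℝ) - 1)) * ε ≤ θ ^ (-((k : ℝ) - 1)) * θ ^ (K : ℝ) :=
              mul_le_mul_of_nonneg_left hεK hp.le
            have heq : θ ^ (-((k : ℝ) - 1)) * θ ^ (K : ℝ) = θ ^ ((K : ℝ) - ((k : ℝ) - 1)) := by
              rw [← Real.rpow_add hθ0]; ring_nf
            calc C * θ ^ (-((k : ℝ) - 1)) * ε = C * (θ ^ (-((k : ℝ) - 1)) * ε) := by ring
              _ ≤ C * (θ ^ (-((k : ℝ) - 1)) * θ ^ (K : ℝ)) :=
                  mul_le_mul_of_nonneg_left this hC.le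
              _ = C * θ ^ ((K : ℝ) - ((k : ℝ) - 1)) := by rw [heq]
          have step2 : ∑ k ∈ Icc 1 K, θ ^ ((K : ℝ) - ((k : ℝ) - 1)) ≤ θ * (1 - θ)⁻¹ := by
            have hcast : ∀ i ∈ range K,
                θ ^ ((K : ℝ) - (((1 + i : ℕ) : ℝ) - 1)) = θ ^ (K - i : ℕ) := by
              intro i hi
              rw [← Real.rpow_natCast θ (K - i)]
              congr 1
              rw [Nat.cast_sub (mem_range.1 hi).le]
              push_cast; ring
            calc ∑ k ∈ Icc 1 K, θ ^ ((K : ℝ) - ((k : ℝ) - 1))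
                = ∑ i ∈ range K, θ ^ ((K : ℝ) - (((1 + i : ℕ) : ℝ) - 1)) := by
                  rw [← Finset.Ico_add_one_right_eq_Icc, Finset.sum_Ico_eq_sum_range, Nat.add_sub_cancel]
              _ = ∑ i ∈ range K, θ ^ (K - i : ℕ) := Finset.sum_congr rfl hcast
              _ = ∑ i ∈ range K, θ ^ (K - 1 - i + 1) := by
                  refine Finset.sum_congr rfl fun i hi => ?_
                  have := mem_range.1 hi
                  congr 1; omega
              _ = ∑ i ∈ range K, θ ^ (i + 1) :=
                  Finset.sum_range_reflect (fun i => θ ^ (i + 1)) K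
              _ = θ * ∑ i ∈ range K, θ ^ i := by
                  simp [pow_succ, Finset.mul_sum, mul_comm]
              _ ≤ θ * (1 - θ)⁻¹ :=
                  mul_le_mul_of_nonneg_left (geom_aux hθ0.le hθ1 K) hθ0.le
          calc ∑ k ∈ Icc 1 K, C * θ ^ (-((k : ℝ) - 1)) * ε
              ≤ ∑ k ∈ Icc 1 K, C * θ ^ ((K : ℝ) - ((k : ℝ) - 1)) :=
                Finset.sum_le_sum step1
            _ = C * ∑ k ∈ Icc 1 K, θ ^ ((K : ℝ) - ((k : ℝ) - 1)) := by
                rw [Finset.mul_sum]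
            _ ≤ C * (θ * (1 - θ)⁻¹) := mul_le_mul_of_nonneg_left step2 hC.le
        exact add_le_add S1 S2
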